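/- Joint simulation lemma for dynamics and rewards: Let P and P̂ be two transition kernels on the finite state and action spaces S, A, let r and r̂ be reward functions with 0 ≤ r(s,a) ≤ R_max and 0 ≤ r̂(s,a) ≤ R_max, let γ ∈ (0,1) and ρ₀ be an initial distribution. Then for every stationary policy π, |V_π(P, r) − V_π(P̂, r̂)| ≤ (1/(1−γ)) · Σ_{(s,a)} d̄_π(s,a) · ( |r(s,a) − r̂(s,a)| + (γ·R_max/(2(1−γ)))·‖P(·|s,a) − P̂(·|s,a)‖₁ ), where d̄_π is the normalized discounted occupancy of π under P and V_π(Q, ρ) denotes the value of π under kernel Q and reward ρ. -/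

import Mathlib

open Finset Real

/-- `p` is a probability mass function on a finite type. -/
def IsPMF {X : Type*} [Fintype X] (p : X → ℝ) : Prop :=
  (∀ x, 0 ≤ p x) ∧ ∑ x, p x = 1

/-- `P` is a transition kernel: each `P s a` is a pmf on states. -/
def IsKernel {S A : Type*} [Fintype S] [Fintype A] (P : S → A → S → ℝ) : Prop :=
  ∀ s a, IsPMF (P s a)

/-- `pol` is a stationary policy: each `pol s` is a pmf on actions. -/
def IsPolicy {S A : Type*} [Fintype S] [Fintype A] (pol : S → A → ℝ) : Prop :=
  ∀ s, IsPMF (pol s)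

/-- `V` satisfies the Bellman evaluation equation for policy `pol` under kernel `P`,
reward `r` and discount `γ`. -/
def IsValue {S A : Type*} [Fintype S] [Fintype A] (P : S → A → S → ℝ) (pol : S → A → ℝ)
    (r : S → A → ℝ) (γ : ℝ) (V : S → ℝ) : Prop :=
  ∀ s, V s = ∑ a, pol s a * (r s a + γ * ∑ s', P s a s' * V s')

/-- `d` is the (unnormalized) discounted state-action occupancy of `pol` under kernel `P`
with initial distribution `ρ₀` and discount `γ`. -/
def IsOcc {S A : Type*} [Fintype S] [Fintype A] (P : S → A → S → ℝ) (pol : S → A → ℝ)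
    (ρ₀ : S → ℝ) (γ : ℝ) (d : S → A → ℝ) : Prop :=
  ∀ s a, d s a = pol s a * (ρ₀ s + γ * ∑ x : S × A, d x.1 x.2 * P x.1 x.2 s)

/-- ℓ₁ distance between two pmfs on a finite type. -/
noncomputable def l1Dist {X : Type*} [Fintype X] (p q : X → ℝ) : ℝ :=
  ∑ x, |p x - q x|

/-- Total variation distance between two pmfs on a finite type. -/
noncomputable def tvDist {X : Type*} [Fintype X] (p q : X → ℝ) : ℝ :=
  (1 / 2) * ∑ x, |p x - q x|

/-- Kullback-Leibler divergence between two pmfs on a finite type (finite under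
absolute continuity). -/
noncomputable def klF {X : Type*} [Fintype X] (p q : X → ℝ) : ℝ :=
  ∑ x, p x * Real.log (p x / q x)

/-- `d_data` satisfies κ-coverage for the policy set `Pol` under kernel `P`:
every occupancy of a policy in `Pol` is dominated by `κ · d_data`. -/
def KappaCoverage {S A : Type*} [Fintype S] [Fintype A] (P : S → A → S → ℝ) (ρ₀ : S → ℝ)
    (γ : ℝ) (Pol : Set (S → A → ℝ)) (ddata : S → A → ℝ) (κ : ℝ) : Prop :=
  ∀ pol ∈ Pol, ∀ dpol : S → A → ℝ, IsOcc P pol ρ₀ γ dpol → ∀ s a, dpol s a ≤ κ * ddata s a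

/-- Critic discrepancy `Δ_{D,P̂}(s,a)`. -/
noncomputable def critDelta {S A : Type*} [Fintype S] (P Phat : S → A → S → ℝ)
    (D : S → A → S → ℝ) (s : S) (a : A) : ℝ :=
  (∑ s', P s a s' * D s a s') - ∑ s', Phat s a s' * D s a s'

/-- Supremum over the critic class of the critic discrepancy at `(s,a)`. -/
noncomputable def critSup {S A : Type*} [Fintype S] (𝒟 : Set (S → A → S → ℝ))
    (P Phat : S → A → S → ℝ) (s : S) (a : A) : ℝ :=
  sSup {y | ∃ D ∈ 𝒟, y = critDelta P Phat D s a}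

/-- **Joint simulation lemma for dynamics and rewards.** The value gap under jointly
differing kernels and rewards is bounded by the normalized-occupancy-weighted sum of
the reward error and the scaled one-step ℓ₁ transition error. -/
lemma negPart_eq (t : ℝ) : max 0 (-t) = (|t| - t) / 2 := by
  rcases le_total 0 t with h | h
  · rw [max_eq_left (by linarith), abs_of_nonneg h]; ring
  · rw [max_eq_right (by linarith), abs_of_nonpos h]; ring

lemma my_value_bounds {S A : Type*} [Fintype S] [Fintype A] [Nonempty S] [Nonempty A]
    (P : S → A → S → ℝ) (hP : IsKernel P) (r : S → A → ℝ) (Rmax : ℝ)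
    (hr : ∀ s a, 0 ≤ r s a ∧ r s a ≤ Rmax)
    (γ : ℝ) (hγ0 : 0 < γ) (hγ1 : γ < 1)
    (pol : S → A → ℝ) (hpol : IsPolicy pol)
    (V : S → ℝ) (hV : IsValue P pol r γ V) :
    ∀ s, 0 ≤ V s ∧ V s ≤ Rmax / (1 - γ) := by
  obtain ⟨s₀, -, hs₀⟩ := Finset.exists_max_image Finset.univ V ⟨Classical.arbitrary S, mem_univ _⟩
  obtain ⟨s₁, -, hs₁⟩ := Finset.exists_min_image Finset.univ V ⟨Classical.arbitrary S, mem_univ _⟩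
  have hM : ∀ s, V s ≤ V s₀ := fun s => hs₀ s (mem_univ s)
  have hm : ∀ s, V s₁ ≤ V s := fun s => hs₁ s (mem_univ s)
  have h1 : V s₀ ≤ Rmax + γ * V s₀ := by
    conv_lhs => rw [hV s₀]
    calc ∑ a, pol s₀ a * (r s₀ a + γ * ∑ s', P s₀ a s' * V s')
        ≤ ∑ a, pol s₀ a * (Rmax + γ * V s₀) := by
          apply Finset.sum_le_sum; intro a _
          apply mul_le_mul_of_nonneg_left _ ((hpol s₀).1 a)
          have hsum : ∑ s', P s₀ a s' * V s' ≤ V s₀ := by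
            calc ∑ s', P s₀ a s' * V s' ≤ ∑ s', P s₀ a s' * V s₀ :=
                Finset.sum_le_sum fun s' _ =>
                  mul_le_mul_of_nonneg_left (hM s') ((hP s₀ a).1 s')
            _ = V s₀ := by rw [← Finset.sum_mul, (hP s₀ a).2, one_mul]
          have := (hr s₀ a).2
          nlinarith [hγ0.le]
      _ = Rmax + γ * V s₀ := by rw [← Finset.sum_mul, (hpol s₀).2, one_mul]
  have h2 : γ * V s₁ ≤ V s₁ := by
    conv_rhs => rw [hV s₁]
    calc γ * V s₁ = ∑ a, pol s₁ a * (γ * V s₁) := by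
          rw [← Finset.sum_mul, (hpol s₁).2, one_mul]
      _ ≤ ∑ a, pol s₁ a * (r s₁ a + γ * ∑ s', P s₁ a s' * V s') := by
          apply Finset.sum_le_sum; intro a _
          apply mul_le_mul_of_nonneg_left _ ((hpol s₁).1 a)
          have hsum : V s₁ ≤ ∑ s', P s₁ a s' * V s' := by
            calc V s₁ = ∑ s', P s₁ a s' * V s₁ := by
                  rw [← Finset.sum_mul, (hP s₁ a).2, one_mul]
            _ ≤ ∑ s', P s₁ a s' * V s' :=
                Finset.sum_le_sum fun s' _ =>
                  mul_le_mul_of_nonneg_left (hm s') ((hP s₁ a).1 s')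
          have := (hr s₁ a).1
          nlinarith [hγ0.le]
  intro s
  constructor
  · have : 0 ≤ V s₁ := by nlinarith
    linarith [hm s]
  · have : V s₀ ≤ Rmax / (1 - γ) := by
      rw [le_div_iff₀ (by linarith)]; nlinarith
    linarith [hM s]

lemma my_occ_nonneg {S A : Type*} [Fintype S] [Fintype A]
    (P : S → A → S → ℝ) (hP : IsKernel P)
    (ρ₀ : S → ℝ) (hρ : IsPMF ρ₀)
    (γ : ℝ) (hγ0 : 0 < γ) (hγ1 : γ < 1)
    (pol : S → A → ℝ) (hpol : IsPolicy pol)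
    (d : S → A → ℝ) (hd : IsOcc P pol ρ₀ γ d) :
    ∀ s a, 0 ≤ d s a := by
  set n : S × A → ℝ := fun x => max 0 (-(d x.1 x.2)) with hn
  have hnn : ∀ x, 0 ≤ n x := fun x => le_max_left _ _
  have key : ∑ x : S × A, n x ≤ γ * ∑ x : S × A, n x := by
    have step : ∀ x : S × A, n x ≤ pol x.1 x.2 * (γ * ∑ y : S × A, n y * P y.1 y.2 x.1) := by
      intro x
      have hpolnn := (hpol x.1).1 x.2
      have hρnn := hρ.1 x.1
      show max 0 (-(d x.1 x.2)) ≤ _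
      rw [hd x.1 x.2]
      have e1 : max 0 (-(pol x.1 x.2 * (ρ₀ x.1 + γ * ∑ y : S × A, d y.1 y.2 * P y.1 y.2 x.1)))
          = pol x.1 x.2 * max 0 (-(ρ₀ x.1 + γ * ∑ y : S × A, d y.1 y.2 * P y.1 y.2 x.1)) := by
        rw [negPart_eq, negPart_eq, abs_mul, abs_of_nonneg hpolnn]; ring
      rw [e1]
      apply mul_le_mul_of_nonneg_left _ hpolnn
      have e2 : max 0 (-(ρ₀ x.1 + γ * ∑ y : S × A, d y.1 y.2 * P y.1 y.2 x.1))
          ≤ max 0 (-(γ * ∑ y : S × A, d y.1 y.2 * P y.1 y.2 x.1)) := by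
        rw [negPart_eq, negPart_eq]
        have := abs_add_le (ρ₀ x.1) (γ * ∑ y : S × A, d y.1 y.2 * P y.1 y.2 x.1)
        rw [abs_of_nonneg hρnn] at this
        linarith
      refine e2.trans ?_
      have e3 : max 0 (-(γ * ∑ y : S × A, d y.1 y.2 * P y.1 y.2 x.1))
          = γ * max 0 (-(∑ y : S × A, d y.1 y.2 * P y.1 y.2 x.1)) := by
        rw [negPart_eq, negPart_eq, abs_mul, abs_of_nonneg hγ0.le]; ring
      rw [e3]
      apply mul_le_mul_of_nonneg_left _ hγ0.le
      rw [negPart_eq]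
      have habs := Finset.abs_sum_le_sum_abs (fun y : S × A => d y.1 y.2 * P y.1 y.2 x.1)
        Finset.univ
      calc (|∑ y : S × A, d y.1 y.2 * P y.1 y.2 x.1| - ∑ y : S × A, d y.1 y.2 * P y.1 y.2 x.1) / 2
          ≤ ((∑ y : S × A, |d y.1 y.2 * P y.1 y.2 x.1|) - ∑ y : S × A, d y.1 y.2 * P y.1 y.2 x.1) / 2 := by
            linarith
        _ = ∑ y : S × A, (|d y.1 y.2 * P y.1 y.2 x.1| - d y.1 y.2 * P y.1 y.2 x.1) / 2 := by
            rw [← Finset.sum_sub_distrib, Finset.sum_div]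
        _ = ∑ y : S × A, n y * P y.1 y.2 x.1 := by
            apply Finset.sum_congr rfl; intro y _
            have hPnn := (hP y.1 y.2).1 x.1
            simp only [hn]
            rw [negPart_eq, abs_mul, abs_of_nonneg hPnn]; ring
    calc ∑ x : S × A, n x
        ≤ ∑ x : S × A, pol x.1 x.2 * (γ * ∑ y : S × A, n y * P y.1 y.2 x.1) :=
          Finset.sum_le_sum fun x _ => step x
      _ = γ * ∑ x : S × A, n x := by
          rw [Fintype.sum_prod_type]
          have hs : ∀ s : S, ∑ a, pol s a * (γ * ∑ y : S × A, n y * P y.1 y.2 s)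
              = γ * ∑ y : S × A, n y * P y.1 y.2 s := by
            intro s; rw [← Finset.sum_mul, (hpol s).2, one_mul]
          simp_rw [hs]
          rw [← Finset.mul_sum]
          congr 1
          rw [Finset.sum_comm]
          apply Finset.sum_congr rfl; intro y _
          rw [← Finset.mul_sum, (hP y.1 y.2).2, mul_one]
  have hN : ∑ x : S × A, n x = 0 := by
    have hNnn : 0 ≤ ∑ x : S × A, n x := Finset.sum_nonneg fun x _ => hnn x
    nlinarith
  intro s a
  have := (Finset.sum_eq_zero_iff_of_nonneg (fun x _ => hnn x)).1 hN (s, a) (mem_univ _)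
  have h2 : -(d s a) ≤ n (s, a) := le_max_right _ _
  rw [this] at h2
  linarith

theorem joint_simulation_lemma
    {S A : Type*} [Fintype S] [Fintype A] [Nonempty S] [Nonempty A]
    (P Phat : S → A → S → ℝ) (hP : IsKernel P) (hPhat : IsKernel Phat)
    (r rhat : S → A → ℝ) (Rmax : ℝ)
    (hr : ∀ s a, 0 ≤ r s a ∧ r s a ≤ Rmax)
    (hrhat : ∀ s a, 0 ≤ rhat s a ∧ rhat s a ≤ Rmax)
    (γ : ℝ) (hγ0 : 0 < γ) (hγ1 : γ < 1)
    (ρ₀ : S → ℝ) (hρ : IsPMF ρ₀)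
    (pol : S → A → ℝ) (hpol : IsPolicy pol)
    (V Vhat : S → ℝ) (hV : IsValue P pol r γ V) (hVhat : IsValue Phat pol rhat γ Vhat)
    (dpol : S → A → ℝ) (hd : IsOcc P pol ρ₀ γ dpol) :
    |(∑ s, ρ₀ s * V s) - ∑ s, ρ₀ s * Vhat s| ≤
      (1 / (1 - γ)) *
        ∑ x : S × A, (1 - γ) * dpol x.1 x.2 *
          (|r x.1 x.2 - rhat x.1 x.2| +
            γ * Rmax / (2 * (1 - γ)) * l1Dist (P x.1 x.2) (Phat x.1 x.2)) := by
  
  have hγ' : (0:ℝ) < 1 - γ := by linarith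
  have hVb := my_value_bounds Phat hPhat rhat Rmax hrhat γ hγ0 hγ1 pol hpol Vhat hVhat
  have hdnn := my_occ_nonneg P hP ρ₀ hρ γ hγ0 hγ1 pol hpol dpol hd
  set c : S → A → ℝ := fun s a =>
    (r s a - rhat s a) + γ * ∑ s', (P s a s' - Phat s a s') * Vhat s' with hc
  set g : S → ℝ := fun s => V s - Vhat s with hg
  set W : S → A → ℝ := fun s a =>
    |r s a - rhat s a| + γ * Rmax / (2 * (1 - γ)) * l1Dist (P s a) (Phat s a) with hW
  have hgs : ∀ s, g s = ∑ a, pol s a * (c s a + γ * ∑ s', P s a s' * g s') := by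
    intro s
    simp only [hg, hc]
    rw [hV s, hVhat s, ← Finset.sum_sub_distrib]
    apply Finset.sum_congr rfl; intro a _
    have e1 : ∑ s', (P s a s' - Phat s a s') * Vhat s'
        = (∑ s', P s a s' * Vhat s') - ∑ s', Phat s a s' * Vhat s' := by
      rw [← Finset.sum_sub_distrib]; exact Finset.sum_congr rfl fun _ _ => by ring
    have e2 : ∑ s', P s a s' * (V s' - Vhat s')
        = (∑ s', P s a s' * V s') - ∑ s', P s a s' * Vhat s' := by
      rw [← Finset.sum_sub_distrib]; exact Finset.sum_congr rfl fun _ _ => by ring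
    rw [e1, e2]; ring
  -- the two evaluations of the same sum
  have eq1 : ∑ x : S × A, dpol x.1 x.2 * (c x.1 x.2 + γ * ∑ s', P x.1 x.2 s' * g s')
      = (∑ s, ρ₀ s * g s)
        + γ * ∑ y : S × A, dpol y.1 y.2 * ∑ s, P y.1 y.2 s * g s := by
    rw [Fintype.sum_prod_type]
    have hrepl : ∀ s a, dpol s a * (c s a + γ * ∑ s', P s a s' * g s')
        = pol s a * (ρ₀ s + γ * ∑ y : S × A, dpol y.1 y.2 * P y.1 y.2 s)
            * (c s a + γ * ∑ s', P s a s' * g s') := by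
      intro s a; rw [← hd s a]
    have hsum : ∀ s : S, ∑ a, dpol s a * (c s a + γ * ∑ s', P s a s' * g s')
        = (ρ₀ s + γ * ∑ y : S × A, dpol y.1 y.2 * P y.1 y.2 s) * g s := by
      intro s
      rw [hgs s, Finset.mul_sum]
      apply Finset.sum_congr rfl; intro a _
      rw [hrepl s a]; ring
    simp_rw [hsum]
    have expand : ∀ s : S, (ρ₀ s + γ * ∑ y : S × A, dpol y.1 y.2 * P y.1 y.2 s) * g s
        = ρ₀ s * g s + γ * ∑ y : S × A, dpol y.1 y.2 * (P y.1 y.2 s * g s) := by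
      intro s
      have : (∑ y : S × A, dpol y.1 y.2 * P y.1 y.2 s) * g s
          = ∑ y : S × A, dpol y.1 y.2 * (P y.1 y.2 s * g s) := by
        rw [Finset.sum_mul]; exact Finset.sum_congr rfl fun _ _ => by ring
      rw [add_mul, mul_assoc, this]
    simp_rw [expand]
    rw [Finset.sum_add_distrib]
    congr 1
    rw [← Finset.mul_sum]
    congr 1
    rw [Finset.sum_comm]
    exact Finset.sum_congr rfl fun y _ => by rw [Finset.mul_sum]
  have eq2 : ∑ x : S × A, dpol x.1 x.2 * (c x.1 x.2 + γ * ∑ s', P x.1 x.2 s' * g s')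
      = (∑ x : S × A, dpol x.1 x.2 * c x.1 x.2)
        + γ * ∑ y : S × A, dpol y.1 y.2 * ∑ s, P y.1 y.2 s * g s := by
    rw [Finset.mul_sum, ← Finset.sum_add_distrib]
    exact Finset.sum_congr rfl fun x _ => by ring
  have hid : ∑ s, ρ₀ s * g s = ∑ x : S × A, dpol x.1 x.2 * c x.1 x.2 := by
    linarith [eq1, eq2.symm]
  -- pointwise bound on c
  have hRnn : 0 ≤ Rmax :=
    le_trans (hr (Classical.arbitrary S) (Classical.arbitrary A)).1
      (hr (Classical.arbitrary S) (Classical.arbitrary A)).2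
  have hcb : ∀ s a, |c s a| ≤ W s a := by
    intro s a
    have hκnn : 0 ≤ Rmax / (2 * (1 - γ)) := div_nonneg hRnn (by linarith)
    have hsub : ∑ s', (P s a s' - Phat s a s') = 0 := by
      rw [Finset.sum_sub_distrib, (hP s a).2, (hPhat s a).2, sub_self]
    have hshift : ∑ s', (P s a s' - Phat s a s') * Vhat s'
        = ∑ s', (P s a s' - Phat s a s') * (Vhat s' - Rmax / (2 * (1 - γ))) := by
      have h' : ∑ s', (P s a s' - Phat s a s') * (Vhat s' - Rmax / (2 * (1 - γ)))
          = (∑ s', (P s a s' - Phat s a s') * Vhat s')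
            - Rmax / (2 * (1 - γ)) * ∑ s', (P s a s' - Phat s a s') := by
        rw [Finset.mul_sum, ← Finset.sum_sub_distrib]
        exact Finset.sum_congr rfl fun _ _ => by ring
      rw [h', hsub, mul_zero, sub_zero]
    have habs : |∑ s', (P s a s' - Phat s a s') * (Vhat s' - Rmax / (2 * (1 - γ)))|
        ≤ Rmax / (2 * (1 - γ)) * l1Dist (P s a) (Phat s a) := by
      calc |∑ s', (P s a s' - Phat s a s') * (Vhat s' - Rmax / (2 * (1 - γ)))|
          ≤ ∑ s', |(P s a s' - Phat s a s') * (Vhat s' - Rmax / (2 * (1 - γ)))| :=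
            Finset.abs_sum_le_sum_abs _ _
        _ ≤ ∑ s', |P s a s' - Phat s a s'| * (Rmax / (2 * (1 - γ))) := by
            apply Finset.sum_le_sum; intro s' _
            rw [abs_mul]
            apply mul_le_mul_of_nonneg_left _ (abs_nonneg _)
            have h2κ : Rmax / (1 - γ) = 2 * (Rmax / (2 * (1 - γ))) := by
              field_simp
            have := hVb s'
            rw [abs_le]
            constructor <;> [linarith [this.1]; linarith [this.2, h2κ ▸ this.2]]
        _ = Rmax / (2 * (1 - γ)) * l1Dist (P s a) (Phat s a) := by
            rw [l1Dist, Finset.mul_sum]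
            exact Finset.sum_congr rfl fun _ _ => by ring
    simp only [hc, hW]
    rw [hshift]
    calc |(r s a - rhat s a)
          + γ * ∑ s', (P s a s' - Phat s a s') * (Vhat s' - Rmax / (2 * (1 - γ)))|
        ≤ |r s a - rhat s a|
          + |γ * ∑ s', (P s a s' - Phat s a s') * (Vhat s' - Rmax / (2 * (1 - γ)))| :=
          abs_add_le _ _
      _ ≤ |r s a - rhat s a|
          + γ * (Rmax / (2 * (1 - γ)) * l1Dist (P s a) (Phat s a)) := by
          rw [abs_mul, abs_of_nonneg hγ0.le]
          have := mul_le_mul_of_nonneg_left habs hγ0.le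
          linarith
      _ = |r s a - rhat s a| + γ * Rmax / (2 * (1 - γ)) * l1Dist (P s a) (Phat s a) := by
          ring
  -- conclusion
  have hL : (∑ s, ρ₀ s * V s) - ∑ s, ρ₀ s * Vhat s = ∑ s, ρ₀ s * g s := by
    rw [← Finset.sum_sub_distrib]
    exact Finset.sum_congr rfl fun s _ => by simp only [hg]; ring
  have hR : (1 / (1 - γ)) * ∑ x : S × A, (1 - γ) * dpol x.1 x.2 * W x.1 x.2
      = ∑ x : S × A, dpol x.1 x.2 * W x.1 x.2 := by
    have : ∑ x : S × A, (1 - γ) * dpol x.1 x.2 * W x.1 x.2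
        = (1 - γ) * ∑ x : S × A, dpol x.1 x.2 * W x.1 x.2 := by
      rw [Finset.mul_sum]; exact Finset.sum_congr rfl fun _ _ => by ring
    rw [this]
    field_simp
  calc |(∑ s, ρ₀ s * V s) - ∑ s, ρ₀ s * Vhat s|
      = |∑ x : S × A, dpol x.1 x.2 * c x.1 x.2| := by rw [hL, hid]
    _ ≤ ∑ x : S × A, |dpol x.1 x.2 * c x.1 x.2| := Finset.abs_sum_le_sum_abs _ _
    _ ≤ ∑ x : S × A, dpol x.1 x.2 * W x.1 x.2 := by
        apply Finset.sum_le_sum; intro x _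
        rw [abs_mul, abs_of_nonneg (hdnn x.1 x.2)]
        exact mul_le_mul_of_nonneg_left (hcb x.1 x.2) (hdnn x.1 x.2)
    _ = (1 / (1 - γ)) * ∑ x : S × A, (1 - γ) * dpol x.1 x.2 * W x.1 x.2 := hR.symm
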